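/- The sequence (δ_n)_{n≥0} converges, and lim_{n→∞} δ_n = 1/(4·log(1+√2)). -/

import Mathlib

/-- `Q k` is `q_{k-2}` of the paper: `Q 0 = q_{-2} = 1`, `Q 1 = q_{-1} = 1`,
and `Q (k+2) = 2 * Q (k+1) + Q k`, so that `q_n = Q (n+2)` for `n ≥ -2`. -/
def Q : ℕ → ℤ
  | 0 => 1
  | 1 => 1
  | (k+2) => 2 * Q (k+1) + Q k

/-- `q_n` for `n ≥ 0`. -/
def qn (n : ℕ) : ℤ := Q (n + 2)

/-- `P k` is `p_{k-2}` of the paper: `P 0 = p_{-2} = 0`, `P 1 = p_{-1} = 0`,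
and `P (k+2) = 2 * P (k+1) + P k + (Q (k+1) + Q k)/2` (the division is exact). -/
def P : ℕ → ℤ
  | 0 => 0
  | 1 => 0
  | (k+2) => 2 * P (k+1) + P k + (Q (k+1) + Q k) / 2

/-- `p_n` for `n ≥ 0`. -/
def pn (n : ℕ) : ℤ := P (n + 2)

/-- `δ_n = p_n / (q_n · log q_n)`. -/
noncomputable def deltan (n : ℕ) : ℝ := (pn n : ℝ) / ((qn n : ℝ) * Real.log (qn n))

/-- Pell numbers. -/
def S : ℕ → ℤ
  | 0 => 0
  | 1 => 1
  | (k+2) => 2 * S (k+1) + S k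

lemma Q_odd : ∀ k, Odd (Q k) := by
  intro k
  induction k using Nat.twoStepInduction with
  | zero => exact ⟨0, rfl⟩
  | one => exact ⟨0, rfl⟩
  | more k ih1 ih2 =>
    show Odd (2 * Q (k+1) + Q k)
    rcases ih1 with ⟨a, ha⟩
    exact ⟨Q (k+1) + a, by omega⟩

lemma key : ∀ k, 4 * P k = k * Q k - S k := by
  intro k
  induction k using Nat.twoStepInduction with
  | zero => simp [P, Q, S]
  | one => simp [P, Q, S]
  | more k ih1 ih2 =>
    have hdvd : (2 : ℤ) ∣ Q (k+1) + Q k := (Odd.add_odd (Q_odd (k+1)) (Q_odd k)).two_dvd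
    have h2 : 2 * ((Q (k+1) + Q k) / 2) = Q (k+1) + Q k := Int.mul_ediv_cancel' hdvd
    show 4 * (2 * P (k+1) + P k + (Q (k+1) + Q k) / 2)
        = (↑(k+2)) * (2 * Q (k+1) + Q k) - (2 * S (k+1) + S k)
    push_cast
    push_cast at ih1 ih2
    linarith [ih1, ih2, h2]

lemma Q_pos : ∀ k, 1 ≤ Q k := by
  intro k
  induction k using Nat.twoStepInduction with
  | zero => norm_num [Q]
  | one => norm_num [Q]
  | more k ih1 ih2 => show 1 ≤ 2 * Q (k+1) + Q k; linarith

lemma S_bounds : ∀ k, 0 ≤ S k ∧ S k ≤ Q k := by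
  intro k
  induction k using Nat.twoStepInduction with
  | zero => norm_num [Q, S]
  | one => norm_num [Q, S]
  | more k ih1 ih2 =>
    obtain ⟨h1, h2⟩ := ih1
    obtain ⟨h3, h4⟩ := ih2
    constructor
    · show 0 ≤ 2 * S (k+1) + S k; linarith
    · show 2 * S (k+1) + S k ≤ 2 * Q (k+1) + Q k; linarith

noncomputable def al : ℝ := 1 + Real.sqrt 2

lemma al_gt_one : 1 < al := by
  have := Real.sqrt_pos.mpr (by norm_num : (0:ℝ) < 2)
  unfold al; linarith

lemma al_sq : al ^ 2 = 2 * al + 1 := by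
  have h : Real.sqrt 2 ^ 2 = 2 := Real.sq_sqrt (by norm_num)
  unfold al; ring_nf; nlinarith [h]

lemma Q_real_bounds : ∀ k, (Q k : ℝ) ≤ al ^ k ∧ al ^ k ≤ 4 * Q k := by
  have h1 := al_gt_one
  intro k
  induction k using Nat.twoStepInduction with
  | zero => norm_num [Q]
  | one =>
    norm_num [Q]
    constructor
    · linarith
    · have := Real.sqrt_lt_sqrt (by norm_num : (0:ℝ) ≤ 2) (by norm_num : (2:ℝ) < 9)
      have h9 : Real.sqrt 9 = 3 := by
        rw [show (9:ℝ) = 3^2 by norm_num, Real.sqrt_sq (by norm_num)]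
      unfold al; rw [h9] at this; linarith
  | more k ih1 ih2 =>
    obtain ⟨h2, h3⟩ := ih1
    obtain ⟨h4, h5⟩ := ih2
    have hp : (0:ℝ) < al ^ k := pow_pos (by linarith) k
    have he : al ^ (k+2) = 2 * al ^ (k+1) + al ^ k := by
      have : al ^ (k+2) = al ^ k * al ^ 2 := by ring
      rw [this, al_sq]; ring
    have he1 : al ^ (k+1) = al ^ k * al := by ring
    constructor
    · show ((2 * Q (k+1) + Q k : ℤ) : ℝ) ≤ al ^ (k+2)
      push_cast
      rw [he]; linarith
    · show al ^ (k+2) ≤ 4 * ((2 * Q (k+1) + Q k : ℤ) : ℝ)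
      push_cast
      rw [he]; linarith

lemma qn_ge_three (n : ℕ) : 3 ≤ qn n := by
  have h1 := Q_pos n
  have h2 := Q_pos (n+1)
  show (3:ℤ) ≤ 2 * Q (n+1) + Q n
  linarith

lemma log_al_pos : 0 < Real.log al := Real.log_pos al_gt_one

theorem deltan_tendsto :
    Filter.Tendsto deltan Filter.atTop
      (nhds (1 / (4 * Real.log (1 + Real.sqrt 2)))) := by
  have hal := al_gt_one
  have hL := log_al_pos
  set L := Real.log al with hLdef
  have hq3 : ∀ n : ℕ, (3:ℝ) ≤ (qn n : ℝ) := fun n => by exact_mod_cast qn_ge_three n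
  have hqpos : ∀ n : ℕ, (0:ℝ) < (qn n : ℝ) := fun n => lt_of_lt_of_le (by norm_num) (hq3 n)
  have hlogq : ∀ n : ℕ, 0 < Real.log (qn n) := fun n =>
    Real.log_pos (by linarith [hq3 n])
  have hm : ∀ n : ℕ, (0:ℝ) < (n:ℝ) + 2 := fun n => by positivity
  -- inverses tend to zero
  have hmtop : Filter.Tendsto (fun n : ℕ => (n:ℝ) + 2) Filter.atTop Filter.atTop :=
    Filter.tendsto_atTop_add_const_right _ 2 tendsto_natCast_atTop_atTop
  have hinv : Filter.Tendsto (fun n : ℕ => ((n:ℝ) + 2)⁻¹) Filter.atTop (nhds 0) :=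
    hmtop.inv_tendsto_atTop
  -- rewrite deltan
  have hrw : ∀ n : ℕ, deltan n =
      (1 - ((S (n+2) : ℝ) / (qn n : ℝ)) / ((n:ℝ) + 2)) /
        (4 * (Real.log (qn n) / ((n:ℝ) + 2))) := by
    intro n
    have hk := key (n+2)
    have hpn : (4:ℝ) * (pn n : ℝ) = ((n:ℝ)+2) * (qn n : ℝ) - (S (n+2) : ℝ) := by
      have : ((4 * P (n+2) : ℤ) : ℝ) = (((↑(n+2) * Q (n+2) - S (n+2) : ℤ)) : ℝ) := by
        exact_mod_cast congrArg (fun z : ℤ => (z : ℝ)) hk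
      push_cast at this
      unfold pn qn
      push_cast
      linarith
    unfold deltan
    have h1 : (qn n : ℝ) ≠ 0 := ne_of_gt (hqpos n)
    have h2 : Real.log (qn n) ≠ 0 := ne_of_gt (hlogq n)
    have h3 : ((n:ℝ) + 2) ≠ 0 := ne_of_gt (hm n)
    field_simp
    linear_combination hpn
  rw [show (1 : ℝ) / (4 * Real.log (1 + Real.sqrt 2)) = (1 - 0) / (4 * L) by
    rw [hLdef]; unfold al; norm_num]
  refine Filter.Tendsto.congr (fun n => (hrw n).symm) (Filter.Tendsto.div ?_ ?_ ?_)
  · -- numerator → 1 - 0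
    refine Filter.Tendsto.sub tendsto_const_nhds ?_
    refine tendsto_of_tendsto_of_tendsto_of_le_of_le (g := fun _ : ℕ => (0:ℝ))
      (h := fun n : ℕ => ((n:ℝ) + 2)⁻¹) tendsto_const_nhds hinv ?_ ?_
    · intro n
      have hsb := S_bounds (n+2)
      have hs0 : (0:ℝ) ≤ (S (n+2) : ℝ) := by exact_mod_cast hsb.1
      exact div_nonneg (div_nonneg hs0 (le_of_lt (hqpos n))) (le_of_lt (hm n))
    · intro n
      have hsb := S_bounds (n+2)
      have hsq : (S (n+2) : ℝ) ≤ (qn n : ℝ) := by exact_mod_cast hsb.2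
      have h1 : (S (n+2) : ℝ) / (qn n : ℝ) ≤ 1 := by
        rw [div_le_one (hqpos n)]; exact hsq
      calc ((S (n+2) : ℝ) / (qn n : ℝ)) / ((n:ℝ) + 2)
          ≤ 1 / ((n:ℝ) + 2) := by gcongr
        _ = ((n:ℝ) + 2)⁻¹ := one_div _
  · -- denominator → 4 * L
    refine Filter.Tendsto.const_mul 4 ?_
    refine tendsto_of_tendsto_of_tendsto_of_le_of_le
      (g := fun n : ℕ => L - Real.log 4 * ((n:ℝ) + 2)⁻¹)
      (h := fun _ : ℕ => L) ?_ tendsto_const_nhds ?_ ?_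
    · have : Filter.Tendsto (fun n : ℕ => Real.log 4 * ((n:ℝ) + 2)⁻¹)
          Filter.atTop (nhds 0) := by
        simpa using hinv.const_mul (Real.log 4)
      simpa using tendsto_const_nhds.sub this
    · intro n
      have hb := Q_real_bounds (n+2)
      have hub : al ^ (n+2) ≤ 4 * (qn n : ℝ) := hb.2
      have hlog : ((n:ℝ) + 2) * Real.log al ≤ Real.log 4 + Real.log (qn n) := by
        have h0 := Real.log_le_log (by positivity) hub
        rw [Real.log_pow, Real.log_mul (by norm_num) (ne_of_gt (hqpos n))] at h0
        push_cast at h0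
        linarith
      have heq : L - Real.log 4 * ((n:ℝ)+2)⁻¹
          = (((n:ℝ)+2) * L - Real.log 4) / ((n:ℝ)+2) := by
        field_simp
      show L - Real.log 4 * ((n:ℝ)+2)⁻¹ ≤ Real.log (qn n) / ((n:ℝ)+2)
      rw [heq]
      gcongr
      rw [hLdef]; linarith
    · intro n
      have hb := Q_real_bounds (n+2)
      have hub : (qn n : ℝ) ≤ al ^ (n+2) := hb.1
      have hlog : Real.log (qn n) ≤ ((n:ℝ) + 2) * Real.log al := by
        have h0 := Real.log_le_log (hqpos n) hub
        rw [Real.log_pow] at h0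
        push_cast at h0
        linarith
      show Real.log (qn n) / ((n:ℝ)+2) ≤ L
      rw [div_le_iff₀ (hm n), hLdef]
      linarith
  · positivity
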